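/- arXiv:2603.16214 — 3 statements merged into one kernel-verified Lean document; each statement's English description precedes it below -/
import Mathlib

section
/- Let H be an N×N positive definite Hermitian matrix with eigenvalues μ₁, …, μ_N, and m ≥ 1 an integer. Define the Nm×Nm block matrix 𝒢 with blocks 𝒢_{t,t+1} = I_N for 1 ≤ t ≤ m−1, 𝒢_{m,1} = H, and zero elsewhere. Then 𝒢 is diagonalizable and its eigenvalues are exactly the numbers e^{2πik/m} μ_j^{1/m} for 1 ≤ j ≤ N and 0 ≤ k ≤ m−1. -/
open scoped Matrix ComplexOrder

private lemma sum_pow_exp_eq_zero {m : ℕ} (hm : 1 ≤ m) {a : ℕ} (ha : ¬ (m ∣ a)) :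
    ∑ k : Fin m, Complex.exp (2 * Real.pi * Complex.I * a / m) ^ (k : ℕ) = 0 := by
  have hm0 : (m : ℂ) ≠ 0 := Nat.cast_ne_zero.mpr (by omega)
  set ζ := Complex.exp (2 * Real.pi * Complex.I * a / m) with hζ
  have hζm : ζ ^ m = 1 := by
    rw [hζ, ← Complex.exp_nat_mul]
    have h : (m : ℂ) * (2 * Real.pi * Complex.I * a / m) = (a : ℂ) * (2 * Real.pi * Complex.I) := by
      field_simp
    rw [h]
    simpa using Complex.exp_int_mul_two_pi_mul_I (a : ℤ)
  have hζ1 : ζ ≠ 1 := by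
    intro h
    rw [hζ, Complex.exp_eq_one_iff] at h
    obtain ⟨n, hn⟩ := h
    have h2 : (2 * (Real.pi : ℂ) * Complex.I) ≠ 0 := by
      simp [Real.pi_ne_zero, Complex.I_ne_zero, Complex.ofReal_ne_zero]
    have h3 : (2 * (Real.pi : ℂ) * Complex.I) * ((a : ℂ) / m) =
        (2 * (Real.pi : ℂ) * Complex.I) * (n : ℂ) := by
      linear_combination hn
    have h4 : (a : ℂ) / m = (n : ℂ) := mul_left_cancel₀ h2 h3
    have h5 : (a : ℂ) = (n : ℂ) * m := by
      rw [div_eq_iff hm0] at h4; rw [h4]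
    have h6 : (a : ℤ) = n * m := by exact_mod_cast h5
    exact ha (Int.natCast_dvd_natCast.mp ⟨n, by rw [h6, mul_comm]⟩)
  rw [Fin.sum_univ_eq_sum_range (fun k => ζ ^ k) m, geom_sum_eq hζ1, hζm, sub_self,
    zero_div]

/-- Let `H` be an `N × N` positive definite Hermitian matrix and `m ≥ 1`.
The `Nm × Nm` block companion-type matrix `𝒢` (blocks `𝒢_{t,t+1} = I_N`, `𝒢_{m,1} = H`,
zero elsewhere) is diagonalizable, and its eigenvalues are exactly the numbers
`e^{2πik/m} μ^{1/m}` where `μ` ranges over the (positive real) eigenvalues of `H`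
and `0 ≤ k ≤ m-1`. -/
theorem gadget_diagonalizable_and_eigenvalues (N m : ℕ) (hm : 1 ≤ m)
    (H : Matrix (Fin N) (Fin N) ℂ) (hH : H.PosDef) :
    (∃ (P D : Matrix (Fin m × Fin N) (Fin m × Fin N) ℂ), IsUnit P.det ∧ D.IsDiag ∧
        Matrix.of (fun p q : Fin m × Fin N =>
          if (p.1 : ℕ) + 1 = (q.1 : ℕ) then (if p.2 = q.2 then (1 : ℂ) else 0)
          else if (p.1 : ℕ) = m - 1 ∧ (q.1 : ℕ) = 0 then H p.2 q.2 else 0)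
          = P * D * P⁻¹) ∧
      spectrum ℂ (Matrix.of (fun p q : Fin m × Fin N =>
          if (p.1 : ℕ) + 1 = (q.1 : ℕ) then (if p.2 = q.2 then (1 : ℂ) else 0)
          else if (p.1 : ℕ) = m - 1 ∧ (q.1 : ℕ) = 0 then H p.2 q.2 else 0)) =
        {lam : ℂ | ∃ μ : ℝ, (μ : ℂ) ∈ spectrum ℂ H ∧ ∃ k : Fin m,
          lam = Complex.exp (2 * Real.pi * Complex.I * k / m) * ((μ ^ ((1 : ℝ) / m) : ℝ) : ℂ)} := by
  classical
  haveI : NeZero m := ⟨by omega⟩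
  have hm0 : (m : ℂ) ≠ 0 := Nat.cast_ne_zero.mpr (by omega)
  set G : Matrix (Fin m × Fin N) (Fin m × Fin N) ℂ :=
    Matrix.of (fun p q : Fin m × Fin N =>
      if (p.1 : ℕ) + 1 = (q.1 : ℕ) then (if p.2 = q.2 then (1 : ℂ) else 0)
      else if (p.1 : ℕ) = m - 1 ∧ (q.1 : ℕ) = 0 then H p.2 q.2 else 0) with hG
  have hHe : H.IsHermitian := hH.1
  set μv : Fin N → ℝ := hHe.eigenvalues with hμv
  have hμpos : ∀ j, 0 < μv j := fun j => hH.eigenvalues_pos j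
  have hμne : ∀ j, (μv j : ℂ) ≠ 0 := fun j => by
    exact_mod_cast Complex.ofReal_ne_zero.mpr (ne_of_gt (hμpos j))
  set U : Matrix (Fin N) (Fin N) ℂ := (hHe.eigenvectorUnitary : Matrix (Fin N) (Fin N) ℂ) with hU
  have hUmem : U ∈ Matrix.unitaryGroup (Fin N) ℂ := hHe.eigenvectorUnitary.2
  have hUUs : U * star U = 1 := (Matrix.mem_unitaryGroup_iff).mp hUmem
  have hsUU : star U * U = 1 := (Matrix.mem_unitaryGroup_iff').mp hUmem
  have hspec : H = U * Matrix.diagonal (fun j => (μv j : ℂ)) * star U := by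
    have := hHe.spectral_theorem
    rw [Unitary.conjStarAlgAut_apply] at this
    exact this
  have hHU : H * U = U * Matrix.diagonal (fun j => (μv j : ℂ)) := by
    rw [hspec, mul_assoc, mul_assoc, hsUU, mul_one]
  -- the m-th roots
  set r : Fin N → ℝ := fun j => μv j ^ ((1 : ℝ) / m) with hr
  have hrpos : ∀ j, 0 < r j := fun j => Real.rpow_pos_of_pos (hμpos j) _
  have hrm : ∀ j, (r j : ℂ) ^ m = (μv j : ℂ) := by
    intro j
    rw [← Complex.ofReal_pow]
    congr 1
    rw [hr]
    rw [← Real.rpow_natCast (μv j ^ ((1 : ℝ) / m)) m, ← Real.rpow_mul (le_of_lt (hμpos j))]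
    rw [one_div, inv_mul_cancel₀ (show (m : ℝ) ≠ 0 from Nat.cast_ne_zero.mpr (by omega)),
      Real.rpow_one]
  set lam : Fin m × Fin N → ℂ :=
    fun kj => Complex.exp (2 * Real.pi * Complex.I * (kj.1 : ℕ) / m) * (r kj.2 : ℂ) with hlam
  -- lam ^ a decomposes
  have hlam_pow : ∀ (k : Fin m) (j : Fin N) (a : ℕ),
      lam (k, j) ^ a
        = Complex.exp (2 * Real.pi * Complex.I * a / m) ^ (k : ℕ) * (r j : ℂ) ^ a := by
    intro k j a
    rw [hlam]
    simp only
    rw [mul_pow]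
    congr 1
    rw [← Complex.exp_nat_mul, ← Complex.exp_nat_mul]
    congr 1
    ring
  have hexp_m : Complex.exp (2 * Real.pi * Complex.I * (m : ℕ) / m) = 1 := by
    have h : 2 * (Real.pi : ℂ) * Complex.I * (m : ℕ) / m = (1 : ℤ) * (2 * Real.pi * Complex.I) := by
      field_simp
      simp
    rw [h, Complex.exp_int_mul_two_pi_mul_I]
  have hlam_m : ∀ (k : Fin m) (j : Fin N), lam (k, j) ^ m = (μv j : ℂ) := by
    intro k j
    rw [hlam_pow, hexp_m, one_pow, one_mul, hrm]
  -- the diagonalizing matrices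
  set P : Matrix (Fin m × Fin N) (Fin m × Fin N) ℂ :=
    Matrix.of (fun p q : Fin m × Fin N => lam q ^ (p.1 : ℕ) * U p.2 q.2) with hP
  set B : Matrix (Fin m × Fin N) (Fin m × Fin N) ℂ :=
    Matrix.of (fun q p : Fin m × Fin N =>
      (m : ℂ)⁻¹ * (μv q.2 : ℂ)⁻¹ * lam q ^ (m - (p.1 : ℕ)) *
        (starRingEnd ℂ) (U p.2 q.2)) with hB
  set D : Matrix (Fin m × Fin N) (Fin m × Fin N) ℂ := Matrix.diagonal lam with hD
  -- P * B = 1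
  have hPB : P * B = 1 := by
    ext ⟨t, i⟩ ⟨t', i'⟩
    rw [Matrix.mul_apply, Fintype.sum_prod_type]
    have key : ∀ (k : Fin m) (j : Fin N),
        P (t, i) (k, j) * B (k, j) (t', i')
          = (m : ℂ)⁻¹ * Complex.exp (2 * Real.pi * Complex.I *
              (((t : ℕ) + (m - (t' : ℕ))) : ℕ) / m) ^ (k : ℕ) *
            ((μv j : ℂ)⁻¹ * (r j : ℂ) ^ ((t : ℕ) + (m - (t' : ℕ))) *
              (U i j * (starRingEnd ℂ) (U i' j))) := by
      intro k j
      rw [hP, hB]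
      simp only [Matrix.of_apply]
      rw [show lam (k, j) ^ (t : ℕ) * U i j *
            ((m : ℂ)⁻¹ * (μv j : ℂ)⁻¹ * lam (k, j) ^ (m - (t' : ℕ)) * (starRingEnd ℂ) (U i' j))
          = (m : ℂ)⁻¹ * lam (k, j) ^ ((t : ℕ) + (m - (t' : ℕ))) *
              ((μv j : ℂ)⁻¹ * (U i j * (starRingEnd ℂ) (U i' j))) by rw [pow_add]; ring]
      rw [hlam_pow]
      ring
    simp_rw [key]
    rw [Finset.sum_comm]
    by_cases htt : t = t'
    · subst htt
      have ha : (t : ℕ) + (m - (t : ℕ)) = m := by omega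
      rw [ha]
      have h1 : ∀ j : Fin N, ∑ k : Fin m,
          (m : ℂ)⁻¹ * Complex.exp (2 * Real.pi * Complex.I * (m : ℕ) / m) ^ (k : ℕ) *
            ((μv j : ℂ)⁻¹ * (r j : ℂ) ^ m * (U i j * (starRingEnd ℂ) (U i' j)))
          = U i j * (starRingEnd ℂ) (U i' j) := by
        intro j
        simp only [hexp_m, one_pow, mul_one]
        rw [Finset.sum_const]
        simp only [Finset.card_univ, Fintype.card_fin, nsmul_eq_mul]
        rw [hrm j]
        field_simp
        rw [mul_assoc]; exact mul_div_cancel_left₀ _ (hμne j)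
      simp_rw [h1]
      have h2 : ∑ j : Fin N, U i j * (starRingEnd ℂ) (U i' j) = (U * star U) i i' := by
        rw [Matrix.mul_apply]
        congr 1
      rw [h2, hUUs]
      rcases eq_or_ne i i' with h | h
      · subst h; simp [Matrix.one_apply]
      · simp [Matrix.one_apply, h]
    · have hnd : ¬ (m ∣ ((t : ℕ) + (m - (t' : ℕ)))) := by
        have h1 := t.isLt
        have h2 := t'.isLt
        intro hdvd
        rcases hdvd with ⟨c, hc⟩
        have hc0 : c ≠ 0 := by rintro rfl; omega
        have hc2 : c < 2 := by
          by_contra hcge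
          push_neg at hcge
          have h5 : 2 * m ≤ m * c := by
            calc 2 * m = m * 2 := by ring
              _ ≤ m * c := Nat.mul_le_mul_left m hcge
          omega
        have hc1 : c = 1 := by omega
        subst hc1
        exact htt (Fin.val_injective (by omega))
      have h1 : ∀ j : Fin N, ∑ k : Fin m,
          (m : ℂ)⁻¹ * Complex.exp (2 * Real.pi * Complex.I *
              (((t : ℕ) + (m - (t' : ℕ))) : ℕ) / m) ^ (k : ℕ) *
            ((μv j : ℂ)⁻¹ * (r j : ℂ) ^ ((t : ℕ) + (m - (t' : ℕ))) *
              (U i j * (starRingEnd ℂ) (U i' j)))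
          = 0 := by
        intro j
        rw [← Finset.sum_mul, ← Finset.mul_sum, sum_pow_exp_eq_zero hm hnd]
        simp
      simp_rw [h1]
      rw [Finset.sum_const, smul_zero]
      have : ((t, i) : Fin m × Fin N) ≠ (t', i') := by
        intro h; exact htt (congrArg Prod.fst h)
      rw [Matrix.one_apply_ne this]
  have hPdet : IsUnit P.det := Matrix.isUnit_det_of_right_inverse hPB
  -- G * P = P * D
  have hGP : G * P = P * D := by
    ext ⟨t, i⟩ ⟨k, j⟩
    rw [Matrix.mul_apply, Fintype.sum_prod_type, hD, Matrix.mul_diagonal]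
    by_cases ht : (t : ℕ) = m - 1
    · have h1 : ∀ s : Fin m, ¬ ((t : ℕ) + 1 = (s : ℕ)) := by
        intro s; have := s.isLt; omega
      have hval : ∀ (s : Fin m) (l : Fin N),
          G (t, i) (s, l) * P (s, l) (k, j)
            = if s = 0 then H i l * P ((0 : Fin m), l) (k, j) else 0 := by
        intro s l
        rw [hG]
        simp only [Matrix.of_apply]
        rw [if_neg (h1 s)]
        rcases eq_or_ne s 0 with hs | hs
        · subst hs
          rw [if_pos ⟨ht, by simp⟩, if_pos rfl]
        · rw [if_neg (fun h => hs (Fin.ext (by simp [h.2]))), if_neg hs, zero_mul]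
      simp_rw [hval]
      rw [Finset.sum_comm]
      have h2 : ∀ l : Fin N, ∑ s : Fin m,
          (if s = 0 then H i l * P ((0 : Fin m), l) (k, j) else 0)
            = H i l * P ((0 : Fin m), l) (k, j) := by
        intro l
        rw [Finset.sum_ite_eq' Finset.univ (0 : Fin m)
          (fun _ => H i l * P ((0 : Fin m), l) (k, j))]
        simp
      simp_rw [h2]
      have h3 : ∑ l : Fin N, H i l * P ((0 : Fin m), l) (k, j)
          = ∑ l : Fin N, H i l * U l j := by
        apply Finset.sum_congr rfl
        intro l _
        rw [hP]; simp
      rw [h3]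
      have h4 : ∑ l : Fin N, H i l * U l j = (H * U) i j := (Matrix.mul_apply).symm
      rw [h4, hHU, Matrix.mul_diagonal]
      rw [hP]
      simp only [Matrix.of_apply]
      rw [mul_comm (lam (k, j) ^ (t : ℕ) * U i j) (lam (k, j)), ← mul_assoc, ← pow_succ']
      have h5 : (t : ℕ) + 1 = m := by omega
      rw [show lam (k, j) ^ ((t : ℕ) + 1) = lam (k, j) ^ m by rw [h5], hlam_m]
      ring
    · have htlt : (t : ℕ) + 1 < m := by have := t.isLt; omega
      set t1 : Fin m := ⟨(t : ℕ) + 1, htlt⟩ with ht1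
      have hval : ∀ (s : Fin m) (l : Fin N),
          G (t, i) (s, l) * P (s, l) (k, j)
            = if s = t1 then (if i = l then (1 : ℂ) else 0) * P (t1, l) (k, j) else 0 := by
        intro s l
        rw [hG]
        simp only [Matrix.of_apply]
        rcases eq_or_ne s t1 with hs | hs
        · subst hs
          rw [if_pos rfl, if_pos rfl]
        · rw [if_neg (fun h => hs (Fin.val_injective h.symm)), if_neg (fun h => ht h.1),
            if_neg hs, zero_mul]
      simp_rw [hval]
      rw [Finset.sum_comm]
      have h2 : ∀ l : Fin N, ∑ s : Fin m,
          (if s = t1 then (if i = l then (1 : ℂ) else 0) * P (t1, l) (k, j) else 0)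
            = (if i = l then (1 : ℂ) else 0) * P (t1, l) (k, j) := by
        intro l
        rw [Finset.sum_ite_eq' Finset.univ t1
          (fun _ => (if i = l then (1 : ℂ) else 0) * P (t1, l) (k, j))]
        simp
      simp_rw [h2, ite_mul, one_mul, zero_mul]
      rw [Finset.sum_ite_eq Finset.univ i (fun l => P (t1, l) (k, j))]
      simp only [Finset.mem_univ, if_true]
      rw [hP]
      simp only [Matrix.of_apply, ht1]
      rw [pow_succ]
      ring
  -- conclude the diagonalization
  have hGPD : G = P * D * P⁻¹ := by
    have hPPinv : P * P⁻¹ = 1 := Matrix.mul_nonsing_inv P hPdet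
    calc G = G * (P * P⁻¹) := by rw [hPPinv, mul_one]
      _ = (G * P) * P⁻¹ := by rw [mul_assoc]
      _ = P * D * P⁻¹ := by rw [hGP]
  -- spectra
  have hPunit : IsUnit P := (Matrix.isUnit_iff_isUnit_det P).mpr hPdet
  have hspecG : spectrum ℂ G = Set.range lam := by
    rw [hGPD]
    have h3 : P * D * P⁻¹ = (↑hPunit.unit : Matrix (Fin m × Fin N) (Fin m × Fin N) ℂ) * D *
        (↑hPunit.unit⁻¹ : Matrix (Fin m × Fin N) (Fin m × Fin N) ℂ) := by
      rw [Matrix.coe_units_inv, hPunit.unit_spec]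
    rw [h3, spectrum.units_conjugate, hD, spectrum_diagonal]
  have hUdet : IsUnit U.det := Matrix.isUnit_det_of_right_inverse hUUs
  have hUunit : IsUnit U := (Matrix.isUnit_iff_isUnit_det U).mpr hUdet
  have hspecH : spectrum ℂ H = Set.range (fun j => (μv j : ℂ)) := by
    have h3 : U * Matrix.diagonal (fun j => (μv j : ℂ)) * star U
        = (↑hUunit.unit : Matrix (Fin N) (Fin N) ℂ) * Matrix.diagonal (fun j => (μv j : ℂ)) *
          (↑hUunit.unit⁻¹ : Matrix (Fin N) (Fin N) ℂ) := by
      rw [Matrix.coe_units_inv, hUunit.unit_spec, Matrix.inv_eq_right_inv hUUs]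
    rw [hspec, h3, spectrum.units_conjugate, spectrum_diagonal]
  refine ⟨⟨P, D, hPdet, Matrix.isDiag_diagonal lam, hGPD⟩, ?_⟩
  rw [hspecG]
  ext z
  constructor
  · rintro ⟨⟨k, j⟩, rfl⟩
    refine ⟨μv j, by rw [hspecH]; exact ⟨j, rfl⟩, k, ?_⟩
    simp only [hlam, hr]
  · rintro ⟨μ, hμmem, k, rfl⟩
    rw [hspecH] at hμmem
    obtain ⟨j, hj⟩ := hμmem
    have hj2 : ((μv j : ℝ) : ℂ) = (μ : ℂ) := hj
    have hj' : μv j = μ := by exact_mod_cast hj2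
    exact ⟨(k, j), by simp only [hlam, hr, hj']⟩
end

section
/- For ε > 0, the ε-pseudospectrum of H(1) = X − iZ (i.e. the set of z ∈ ℂ with smallest singular value of H(1) − zI at most ε) is exactly the closed disc {z ∈ ℂ : |z| ≤ √(ε² + 2ε)} centered at the origin. -/
open scoped Matrix

namespace PseudoAux

noncomputable def Hm (z : ℂ) : Matrix (Fin 2) (Fin 2) ℂ :=
  Matrix.of ![![(-Complex.I), 1], ![1, Complex.I]] - z • (1 : Matrix (Fin 2) (Fin 2) ℂ)

lemma clm_apply (z : ℂ) (v : EuclideanSpace ℂ (Fin 2)) (i : Fin 2) :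
    (Matrix.toEuclideanCLM (𝕜 := ℂ) (Hm z) v) i = (Hm z).mulVec (fun j => v j) i := by
  have := Matrix.ofLp_toEuclideanCLM (𝕜 := ℂ) (Hm z) v
  exact congrFun this i

lemma mulVec_eq (z a b : ℂ) :
    (Hm z).mulVec ![a, b] = ![(-Complex.I - z) * a + b, a + (Complex.I - z) * b] := by
  funext i
  fin_cases i <;>
    simp [Hm, Matrix.mulVec, Matrix.one_apply, Fin.sum_univ_two, Matrix.vecHead,
      Matrix.vecTail, dotProduct]

lemma norm_sq_eu (w : EuclideanSpace ℂ (Fin 2)) :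
    ‖w‖ ^ 2 = Complex.normSq (w 0) + Complex.normSq (w 1) := by
  rw [EuclideanSpace.norm_eq, Real.sq_sqrt (by positivity), Fin.sum_univ_two]
  simp [Complex.sq_norm]

lemma norm_clm_sq (z : ℂ) (v : EuclideanSpace ℂ (Fin 2)) :
    ‖Matrix.toEuclideanCLM (𝕜 := ℂ) (Hm z) v‖ ^ 2 =
      Complex.normSq ((-Complex.I - z) * v 0 + v 1)
        + Complex.normSq (v 0 + (Complex.I - z) * v 1) := by
  rw [norm_sq_eu]
  have hv : (fun j => v j) = ![v 0, v 1] := by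
    funext j; fin_cases j <;> rfl
  rw [clm_apply, clm_apply, hv, mulVec_eq]
  simp

end PseudoAux

theorem pseudospectrum_exceptional_point (ε : ℝ) (hε : 0 < ε) :
    {z : ℂ | (⨅ v : Metric.sphere (0 : EuclideanSpace ℂ (Fin 2)) 1,
        ‖Matrix.toEuclideanCLM (𝕜 := ℂ)
            (Matrix.of ![![(-Complex.I), 1], ![1, Complex.I]]
              - z • (1 : Matrix (Fin 2) (Fin 2) ℂ)) (v : EuclideanSpace ℂ (Fin 2))‖) ≤ ε}
      = {z : ℂ | ‖z‖ ≤ Real.sqrt (ε ^ 2 + 2 * ε)} := by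
  ext z
  simp only [Set.mem_setOf_eq]
  have hHm : (Matrix.of ![![(-Complex.I), 1], ![1, Complex.I]]
      - z • (1 : Matrix (Fin 2) (Fin 2) ℂ)) = PseudoAux.Hm z := rfl
  rw [hHm]
  set x := z.re with hx
  set y := z.im with hy
  have hn : Complex.normSq z = x ^ 2 + y ^ 2 := by
    rw [Complex.normSq_apply]; ring
  set s : ℝ := Real.sqrt (1 + x ^ 2 + y ^ 2) with hsdef
  have hs : s ^ 2 = 1 + x ^ 2 + y ^ 2 := Real.sq_sqrt (by positivity)
  have hs0 : 0 ≤ s := Real.sqrt_nonneg _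
  have hs1 : 1 ≤ s := by
    nlinarith [sq_nonneg x, sq_nonneg y]
  have hsy : y < s := by
    nlinarith [sq_nonneg (s + y)]
  -- The matrix as a CLM
  have key_lb : ∀ v : EuclideanSpace ℂ (Fin 2), ‖v‖ = 1 →
      s - 1 ≤ ‖Matrix.toEuclideanCLM (𝕜 := ℂ) (PseudoAux.Hm z) v‖ := by
    intro v hv
    have hnv : Complex.normSq (v 0) + Complex.normSq (v 1) = 1 := by
      have := PseudoAux.norm_sq_eu v
      rw [hv] at this; linarith
    have hsq := PseudoAux.norm_clm_sq z v
    set a := v 0; set b := v 1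
    have key : (s - y) * (Complex.normSq ((-Complex.I - z) * a + b)
          + Complex.normSq (a + (Complex.I - z) * b)
          - (s - 1) ^ 2 * (Complex.normSq a + Complex.normSq b))
        = 2 * Complex.normSq ((-(x : ℂ) - Complex.I) * a + ((s : ℂ) - (y : ℂ)) * b) := by
      simp only [Complex.normSq_apply, Complex.add_re, Complex.add_im, Complex.mul_re,
        Complex.mul_im, Complex.sub_re, Complex.sub_im, Complex.neg_re, Complex.neg_im,
        Complex.I_re, Complex.I_im, Complex.ofReal_re, Complex.ofReal_im, ← hx, ← hy]
      linear_combination (2 * (v 0).re ^ 2 + 2 * (v 0).im ^ 2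
        - (s - y) * ((v 0).re ^ 2 + (v 0).im ^ 2 + (v 1).re ^ 2 + (v 1).im ^ 2)) * hs
    have h2 : (s - 1) ^ 2 ≤ ‖Matrix.toEuclideanCLM (𝕜 := ℂ) (PseudoAux.Hm z) v‖ ^ 2 := by
      rw [hsq]
      rw [hnv, mul_one] at key
      have h2N : 0 ≤ 2 * Complex.normSq ((-(x : ℂ) - Complex.I) * a + ((s : ℂ) - (y : ℂ)) * b) := by
        have := Complex.normSq_nonneg ((-(x : ℂ) - Complex.I) * a + ((s : ℂ) - (y : ℂ)) * b)
        linarith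
      nlinarith [key, h2N, hsy]
    calc s - 1 = Real.sqrt ((s - 1) ^ 2) := (Real.sqrt_sq (by linarith)).symm
      _ ≤ Real.sqrt (‖Matrix.toEuclideanCLM (𝕜 := ℂ) (PseudoAux.Hm z) v‖ ^ 2) :=
          Real.sqrt_le_sqrt h2
      _ = _ := Real.sqrt_sq (norm_nonneg _)
  -- witness vector
  have key_ub : ∃ v : EuclideanSpace ℂ (Fin 2), ‖v‖ = 1 ∧
      ‖Matrix.toEuclideanCLM (𝕜 := ℂ) (PseudoAux.Hm z) v‖ = s - 1 := by
    set w : EuclideanSpace ℂ (Fin 2) :=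
      (WithLp.equiv 2 (Fin 2 → ℂ)).symm ![((s : ℂ) - (y : ℂ)), ((x : ℂ) + Complex.I)] with hw
    have hw0 : w 0 = ((s : ℂ) - (y : ℂ)) := rfl
    have hw1 : w 1 = ((x : ℂ) + Complex.I) := rfl
    have hwn : ‖w‖ ^ 2 = (s - y) ^ 2 + (x ^ 2 + 1) := by
      rw [PseudoAux.norm_sq_eu, hw0, hw1]
      simp [Complex.normSq_apply]
      ring
    have hwpos : 0 < ‖w‖ ^ 2 := by nlinarith [sq_nonneg x]
    have hwne : ‖w‖ ≠ 0 := by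
      intro h; rw [h] at hwpos; simp at hwpos
    have hAw : ‖Matrix.toEuclideanCLM (𝕜 := ℂ) (PseudoAux.Hm z) w‖ ^ 2
        = (s - 1) ^ 2 * ‖w‖ ^ 2 := by
      rw [PseudoAux.norm_clm_sq, hw0, hw1, hwn]
      simp only [Complex.normSq_apply, Complex.add_re, Complex.add_im, Complex.mul_re,
        Complex.mul_im, Complex.sub_re, Complex.sub_im, Complex.neg_re, Complex.neg_im,
        Complex.I_re, Complex.I_im, Complex.ofReal_re, Complex.ofReal_im, ← hx, ← hy]
      linear_combination (-(1 + y) ^ 2 - x ^ 2 + 2 * s * (1 + y) - s ^ 2) * hs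
    refine ⟨((‖w‖⁻¹ : ℝ) : ℂ) • w, ?_, ?_⟩
    · rw [norm_smul]
      simp [norm_inv, abs_of_nonneg (norm_nonneg w), inv_mul_cancel₀ hwne]
    · rw [map_smul, norm_smul]
      have hAwn : ‖Matrix.toEuclideanCLM (𝕜 := ℂ) (PseudoAux.Hm z) w‖ = (s - 1) * ‖w‖ := by
        have h1 : 0 ≤ (s - 1) * ‖w‖ := mul_nonneg (by linarith) (norm_nonneg _)
        nlinarith [norm_nonneg (Matrix.toEuclideanCLM (𝕜 := ℂ) (PseudoAux.Hm z) w)]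
      rw [hAwn]
      simp only [Complex.norm_real, norm_inv, norm_norm]
      field_simp
  -- now the equivalence
  have hne : Nonempty (Metric.sphere (0 : EuclideanSpace ℂ (Fin 2)) 1) := by
    obtain ⟨v, hv, _⟩ := key_ub
    exact ⟨⟨v, by simpa [mem_sphere_iff_norm] using hv⟩⟩
  have hbdd : BddBelow (Set.range fun v : Metric.sphere (0 : EuclideanSpace ℂ (Fin 2)) 1 =>
      ‖Matrix.toEuclideanCLM (𝕜 := ℂ) (PseudoAux.Hm z) (v : EuclideanSpace ℂ (Fin 2))‖) :=
    ⟨0, by rintro r ⟨v, rfl⟩; exact norm_nonneg _⟩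
  have hinf_ge : s - 1 ≤ ⨅ v : Metric.sphere (0 : EuclideanSpace ℂ (Fin 2)) 1,
      ‖Matrix.toEuclideanCLM (𝕜 := ℂ) (PseudoAux.Hm z) (v : EuclideanSpace ℂ (Fin 2))‖ := by
    apply le_ciInf
    intro v
    exact key_lb v (by simpa [mem_sphere_iff_norm] using v.2)
  have hinf_le : (⨅ v : Metric.sphere (0 : EuclideanSpace ℂ (Fin 2)) 1,
      ‖Matrix.toEuclideanCLM (𝕜 := ℂ) (PseudoAux.Hm z) (v : EuclideanSpace ℂ (Fin 2))‖) ≤ s - 1 := by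
    obtain ⟨v, hv, hAv⟩ := key_ub
    have : (⟨v, by simpa [mem_sphere_iff_norm] using hv⟩ :
        Metric.sphere (0 : EuclideanSpace ℂ (Fin 2)) 1) = _ := rfl
    calc _ ≤ ‖Matrix.toEuclideanCLM (𝕜 := ℂ) (PseudoAux.Hm z)
          ((⟨v, by simpa [mem_sphere_iff_norm] using hv⟩ :
            Metric.sphere (0 : EuclideanSpace ℂ (Fin 2)) 1) : EuclideanSpace ℂ (Fin 2))‖ :=
        ciInf_le hbdd _
      _ = s - 1 := hAv
  have habs : ‖z‖ = Real.sqrt (x ^ 2 + y ^ 2) := by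
    rw [Complex.norm_def, hn]
  constructor
  · intro h
    have h1 : s - 1 ≤ ε := le_trans hinf_ge h
    have h2 : x ^ 2 + y ^ 2 ≤ ε ^ 2 + 2 * ε := by nlinarith
    rw [habs]
    exact Real.sqrt_le_sqrt h2
  · intro h
    have h2 : x ^ 2 + y ^ 2 ≤ ε ^ 2 + 2 * ε := by
      have := Real.sqrt_le_sqrt (le_of_eq hn.symm)
      have h3 : Real.sqrt (x ^ 2 + y ^ 2) ≤ Real.sqrt (ε ^ 2 + 2 * ε) := by
        rw [← habs]; exact h
      have h4 := Real.sq_sqrt (show (0:ℝ) ≤ x ^ 2 + y ^ 2 by positivity)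
      have h5 := Real.sq_sqrt (show (0:ℝ) ≤ ε ^ 2 + 2 * ε by positivity)
      nlinarith [Real.sqrt_nonneg (x ^ 2 + y ^ 2), Real.sqrt_nonneg (ε ^ 2 + 2 * ε)]
    have hse : s ≤ 1 + ε := by nlinarith
    linarith [hinf_le]
end

section
/- Let σ₀, σ₁, …, σ_{M−1} ∈ [0,1], p₀, …, p_{M−1} ≥ 0 with Σ p_m = 1, and T > 0. Suppose p₀ ≥ 0.8 and let F(θ) = (1/2) Σ_m p_m [e^{−2T²(σ_m−θ)²} + e^{−2T²(σ_m+θ)²}] for θ ∈ [0,1]. Set q = √(log(10/7)/2). Then for every θ ∈ [0,1] with |θ − σ₀| ≤ q/T one has F(θ) ≥ 0.4 e^{−2q²} = 0.28, while for every θ ∈ [0,1] with |θ − σ₀| ≥ 3q/T one has F(θ) ≤ p₀ e^{−18q²} + (1 − p₀) ≤ 0.233. -/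
open Real

set_option maxHeartbeats 1000000 in
/-- For singular values `σ_m ∈ [0,1]`, overlaps `p_m ≥ 0` summing to one
with `p₀ ≥ 0.8`, `T > 0`, the idealized Gaussian filter
`F(θ) = (1/2) Σ_m p_m [e^{-2T²(σ_m-θ)²} + e^{-2T²(σ_m+θ)²}]` with
`q = √(log(10/7)/2)` satisfies: `0.4 e^{-2q²} = 0.28`; for `θ ∈ [0,1]` with
`|θ - σ₀| ≤ q/T`, `F(θ) ≥ 0.4 e^{-2q²}`; and for `θ ∈ [0,1]` with `|θ - σ₀| ≥ 3q/T`,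
`F(θ) ≤ p₀ e^{-18q²} + (1 - p₀) ≤ 0.233`. -/
theorem gaussian_filter_peak_separation (M : ℕ) (hM : 0 < M)
    (s p : Fin M → ℝ) (hs : ∀ i, s i ∈ Set.Icc (0 : ℝ) 1)
    (hs0 : ∀ i, s ⟨0, hM⟩ ≤ s i)
    (hp : ∀ i, 0 ≤ p i) (hpsum : ∑ i, p i = 1) (hp0 : 0.8 ≤ p ⟨0, hM⟩)
    (T : ℝ) (hT : 0 < T) :
    let F : ℝ → ℝ := fun θ => (1 / 2) * ∑ i, p i *
      (Real.exp (-2 * T ^ 2 * (s i - θ) ^ 2) + Real.exp (-2 * T ^ 2 * (s i + θ) ^ 2))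
    let q : ℝ := Real.sqrt (Real.log (10 / 7) / 2)
    (0.4 * Real.exp (-2 * q ^ 2) = 0.28) ∧
    (∀ θ ∈ Set.Icc (0 : ℝ) 1, |θ - s ⟨0, hM⟩| ≤ q / T →
      0.4 * Real.exp (-2 * q ^ 2) ≤ F θ) ∧
    (∀ θ ∈ Set.Icc (0 : ℝ) 1, 3 * q / T ≤ |θ - s ⟨0, hM⟩| →
      F θ ≤ p ⟨0, hM⟩ * Real.exp (-18 * q ^ 2) + (1 - p ⟨0, hM⟩) ∧
        p ⟨0, hM⟩ * Real.exp (-18 * q ^ 2) + (1 - p ⟨0, hM⟩) ≤ 0.233) := by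
  intro F q
  have hL : (0:ℝ) < 10/7 := by norm_num
  have hq0 : 0 ≤ q := Real.sqrt_nonneg _
  have hq2 : q ^ 2 = Real.log (10/7) / 2 := Real.sq_sqrt (by positivity)
  have hE1 : Real.exp (-2 * q ^ 2) = 7/10 := by
    rw [hq2, show -2 * (Real.log (10/7) / 2) = -Real.log (10/7) by ring,
        Real.exp_neg, Real.exp_log hL]
    norm_num
  have hE2 : Real.exp (-18 * q ^ 2) = (7/10 : ℝ) ^ 9 := by
    rw [hq2, show -18 * (Real.log (10/7) / 2) = -Real.log ((10/7:ℝ)^9) by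
      rw [Real.log_pow]; push_cast; ring,
      Real.exp_neg, Real.exp_log (by positivity)]
    norm_num
  set i0 : Fin M := ⟨0, hM⟩ with hi0
  obtain ⟨hs0l, hs0r⟩ := hs i0
  refine ⟨by rw [hE1]; norm_num, ?_, ?_⟩
  · intro θ hθ hdist
    have key : Real.exp (-2 * q^2) ≤ Real.exp (-2 * T^2 * (s i0 - θ)^2) := by
      apply Real.exp_le_exp.2
      have h1 : (s i0 - θ)^2 ≤ (q/T)^2 := by
        rw [← sq_abs, abs_sub_comm]
        exact pow_le_pow_left₀ (abs_nonneg _) hdist 2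
      have h2 : T^2 * (s i0 - θ)^2 ≤ q^2 := by
        have : T^2 * (q/T)^2 = q^2 := by field_simp
        nlinarith [sq_nonneg T]
      nlinarith
    have hsum : p i0 * (Real.exp (-2*T^2*(s i0 - θ)^2) + Real.exp (-2*T^2*(s i0 + θ)^2))
        ≤ ∑ i, p i * (Real.exp (-2*T^2*(s i - θ)^2) + Real.exp (-2*T^2*(s i + θ)^2)) :=
      Finset.single_le_sum (f := fun i => p i * (Real.exp (-2*T^2*(s i - θ)^2) + Real.exp (-2*T^2*(s i + θ)^2))) (fun i _ => mul_nonneg (hp i) (by positivity)) (Finset.mem_univ i0)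
    have hexp2 := (Real.exp_pos (-2*T^2*(s i0 + θ)^2)).le
    show 0.4 * Real.exp (-2 * q^2) ≤ (1/2) * ∑ i, p i *
      (Real.exp (-2*T^2*(s i - θ)^2) + Real.exp (-2*T^2*(s i + θ)^2))
    nlinarith [hp i0, Real.exp_pos (-2*q^2)]
  · intro θ hθ hdist
    obtain ⟨hθ0, hθ1⟩ := hθ
    have hq3 : 0 ≤ 3*q/T := by positivity
    have hb1 : Real.exp (-2*T^2*(s i0 - θ)^2) ≤ Real.exp (-18 * q^2) := by
      apply Real.exp_le_exp.2
      have h1 : (3*q/T)^2 ≤ (s i0 - θ)^2 := by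
        rw [← sq_abs (s i0 - θ), abs_sub_comm]
        exact pow_le_pow_left₀ hq3 hdist 2
      have h2 : T^2 * (3*q/T)^2 = 9 * q^2 := by field_simp; ring
      nlinarith [sq_nonneg T]
    have hb2 : Real.exp (-2*T^2*(s i0 + θ)^2) ≤ Real.exp (-18 * q^2) := by
      apply Real.exp_le_exp.2
      have habs : |θ - s i0| ≤ s i0 + θ := by
        rw [abs_le]; constructor <;> nlinarith
      have h1 : (3*q/T)^2 ≤ (s i0 + θ)^2 :=
        pow_le_pow_left₀ hq3 (le_trans hdist habs) 2
      have h2 : T^2 * (3*q/T)^2 = 9 * q^2 := by field_simp; ring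
      nlinarith [sq_nonneg T]
    have hsplit : p i0 * (Real.exp (-2*T^2*(s i0 - θ)^2) + Real.exp (-2*T^2*(s i0 + θ)^2))
        + ∑ i ∈ Finset.univ.erase i0, p i *
          (Real.exp (-2*T^2*(s i - θ)^2) + Real.exp (-2*T^2*(s i + θ)^2))
        = ∑ i, p i * (Real.exp (-2*T^2*(s i - θ)^2) + Real.exp (-2*T^2*(s i + θ)^2)) :=
      Finset.add_sum_erase _ (fun i => p i * (Real.exp (-2*T^2*(s i - θ)^2) + Real.exp (-2*T^2*(s i + θ)^2))) (Finset.mem_univ i0)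
    have hrest : ∑ i ∈ Finset.univ.erase i0, p i *
          (Real.exp (-2*T^2*(s i - θ)^2) + Real.exp (-2*T^2*(s i + θ)^2))
        ≤ ∑ i ∈ Finset.univ.erase i0, 2 * p i := by
      apply Finset.sum_le_sum
      intro i _
      have e1 : Real.exp (-2*T^2*(s i - θ)^2) ≤ 1 :=
        Real.exp_le_one_iff.2 (by nlinarith [sq_nonneg T, sq_nonneg (s i - θ)])
      have e2 : Real.exp (-2*T^2*(s i + θ)^2) ≤ 1 :=
        Real.exp_le_one_iff.2 (by nlinarith [sq_nonneg T, sq_nonneg (s i + θ)])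
      nlinarith [hp i]
    have hrestsum : ∑ i ∈ Finset.univ.erase i0, p i = 1 - p i0 := by
      have := Finset.add_sum_erase Finset.univ p (Finset.mem_univ i0)
      linarith [hpsum, this]
    have hmain : F θ ≤ p i0 * Real.exp (-18 * q^2) + (1 - p i0) := by
      show (1/2) * ∑ i, p i *
        (Real.exp (-2*T^2*(s i - θ)^2) + Real.exp (-2*T^2*(s i + θ)^2))
        ≤ p i0 * Real.exp (-18 * q^2) + (1 - p i0)
      have h2p : ∑ i ∈ Finset.univ.erase i0, 2 * p i = 2 * (1 - p i0) := by
        rw [← Finset.mul_sum, hrestsum]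
      have hA : p i0 * (Real.exp (-2*T^2*(s i0 - θ)^2) + Real.exp (-2*T^2*(s i0 + θ)^2))
          ≤ p i0 * (2 * Real.exp (-18 * q^2)) :=
        mul_le_mul_of_nonneg_left (by linarith) (hp i0)
      linarith
    refine ⟨hmain, ?_⟩
    rw [hE2]
    have hp1 : p i0 ≤ 1 := by
      have := Finset.single_le_sum (fun i (_ : i ∈ Finset.univ) => hp i) (Finset.mem_univ i0)
      linarith [hpsum]
    nlinarith [hp0]
end
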